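/- Let G = (X ∪ Y, E) be a bipartite graph with parts X and Y satisfying |X| = |Y| = n. Suppose that for every S ⊆ X and S′ ⊆ Y with |S′| < |S| ≤ ⌈n/2⌉ we have e(S, Y ∖ S′) ≠ 0, and that for every T′ ⊆ X and T ⊆ Y with |T′| < |T| ≤ ⌈n/2⌉ we have e(T, X ∖ T′) ≠ 0. Then G has a perfect matching. -/

import Mathlib

open Finset
open scoped Classical

/-- Hall-type criterion for perfect matchings in bipartite graphs:
if between any `S ⊆ X` and the complement of any smaller `S' ⊆ Y` there is an edge
(for `|S| ≤ ⌈n/2⌉`), and symmetrically, then the graph has a perfect matching. -/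
theorem hall_type_matching {V : Type*} [Fintype V] [DecidableEq V]
    (G : SimpleGraph V) (X Y : Finset V) (n : ℕ)
    (hdisj : Disjoint X Y) (hcover : X ∪ Y = Finset.univ)
    (hX : X.card = n) (hY : Y.card = n)
    (hbip : ∀ a b, G.Adj a b → (a ∈ X ∧ b ∈ Y) ∨ (a ∈ Y ∧ b ∈ X))
    (h1 : ∀ S ⊆ X, ∀ S' ⊆ Y, S'.card < S.card → S.card ≤ (n + 1) / 2 →
      ((S ×ˢ (Y \ S')).filter fun e => G.Adj e.1 e.2).card ≠ 0)
    (h2 : ∀ T' ⊆ X, ∀ T ⊆ Y, T'.card < T.card → T.card ≤ (n + 1) / 2 →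
      ((T ×ˢ (X \ T')).filter fun e => G.Adj e.1 e.2).card ≠ 0) :
    ∃ M : G.Subgraph, M.IsPerfectMatching := by
  classical
  have hXY : ∀ x ∈ X, ∀ y, G.Adj x y → y ∈ Y := by
    intro x hx y hadj
    rcases hbip x y hadj with ⟨_, h⟩ | ⟨h, _⟩
    · exact h
    · exact absurd h (Finset.disjoint_left.mp hdisj hx)
  have hYX : ∀ y ∈ Y, ∀ x, G.Adj y x → x ∈ X := by
    intro y hy x hadj
    rcases hbip y x hadj with ⟨h, _⟩ | ⟨_, h⟩
    · exact absurd h (Finset.disjoint_left.mp hdisj · hy)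
    · exact h
  have hNsubY : ∀ S ⊆ X, S.biUnion (fun v => G.neighborFinset v) ⊆ Y := by
    intro S hS y hy
    obtain ⟨x, hxS, hxy⟩ := Finset.mem_biUnion.mp hy
    exact hXY x (hS hxS) y ((SimpleGraph.mem_neighborFinset _ _ _).mp hxy)
  -- Hall condition for small sets
  have small : ∀ S₁ ⊆ X, S₁.card ≤ (n + 1) / 2 →
      S₁.card ≤ (S₁.biUnion (fun v => G.neighborFinset v)).card := by
    intro S₁ hS₁ hle
    by_contra hlt
    push_neg at hlt
    refine h1 S₁ hS₁ (S₁.biUnion (fun v => G.neighborFinset v)) (hNsubY S₁ hS₁) hlt hle ?_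
    rw [Finset.card_eq_zero, Finset.filter_eq_empty_iff]
    rintro ⟨a, b⟩ hmem hadj
    rw [Finset.mem_product, Finset.mem_sdiff] at hmem
    exact hmem.2.2 (Finset.mem_biUnion.mpr
      ⟨a, hmem.1, (SimpleGraph.mem_neighborFinset _ _ _).mpr hadj⟩)
  -- Hall condition for all sets
  have key : ∀ S ⊆ X, S.card ≤ (S.biUnion (fun v => G.neighborFinset v)).card := by
    intro S hS
    by_cases hc : S.card ≤ (n + 1) / 2
    · exact small S hS hc
    · push_neg at hc
      by_contra hlt
      push_neg at hlt
      set N := S.biUnion (fun v => G.neighborFinset v) with hNdef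
      have hNY : N ⊆ Y := hNsubY S hS
      obtain ⟨S₀, hS₀S, hS₀card⟩ := Finset.exists_subset_card_eq hc.le
      have hN₀ : (n + 1) / 2 ≤ (S₀.biUnion (fun v => G.neighborFinset v)).card := by
        have := small S₀ (hS₀S.trans hS) hS₀card.le
        omega
      have hNbig : (n + 1) / 2 ≤ N.card :=
        le_trans hN₀ (Finset.card_le_card
          (Finset.biUnion_subset_biUnion_of_subset_left _ hS₀S))
      set T := Y \ N with hTdef
      have hTY : T ⊆ Y := Finset.sdiff_subset
      have hTcard : T.card = n - N.card := by
        rw [hTdef, Finset.card_sdiff_of_subset hNY, hY]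
      set T' := T.biUnion (fun v => G.neighborFinset v) with hT'def
      have hT'sub : T' ⊆ X \ S := by
        intro x hx
        obtain ⟨y, hyT, hxy⟩ := Finset.mem_biUnion.mp hx
        have hadj : G.Adj y x := (SimpleGraph.mem_neighborFinset _ _ _).mp hxy
        have hxX : x ∈ X := hYX y (hTY hyT) x hadj
        refine Finset.mem_sdiff.mpr ⟨hxX, fun hxS => ?_⟩
        have : y ∈ N := Finset.mem_biUnion.mpr
          ⟨x, hxS, (SimpleGraph.mem_neighborFinset _ _ _).mpr hadj.symm⟩
        exact (Finset.mem_sdiff.mp hyT).2 this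
      have hT'X : T' ⊆ X := hT'sub.trans Finset.sdiff_subset
      have hScard : S.card ≤ n := hX ▸ Finset.card_le_card hS
      have hNle : N.card ≤ n := hY ▸ Finset.card_le_card hNY
      have hT'le : T'.card ≤ n - S.card := by
        have := Finset.card_le_card hT'sub
        rwa [Finset.card_sdiff_of_subset hS, hX] at this
      have hT'lt : T'.card < T.card := by omega
      have hTle : T.card ≤ (n + 1) / 2 := by omega
      refine h2 T' hT'X T hTY hT'lt hTle ?_
      rw [Finset.card_eq_zero, Finset.filter_eq_empty_iff]
      rintro ⟨y, x⟩ hmem hadj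
      rw [Finset.mem_product] at hmem
      exact (Finset.mem_sdiff.mp hmem.2).2 (Finset.mem_biUnion.mpr
        ⟨y, hmem.1, (SimpleGraph.mem_neighborFinset _ _ _).mpr hadj⟩)
  -- Hall's theorem on the subtype
  have hall : ∀ s : Finset ↥X, s.card ≤ (s.biUnion fun x => G.neighborFinset ↑x).card := by
    intro s
    have h := key (s.image Subtype.val) (by
      intro x hx
      obtain ⟨y, _, rfl⟩ := Finset.mem_image.mp hx
      exact y.2)
    rwa [Finset.card_image_of_injective _ Subtype.val_injective,
      Finset.image_biUnion] at h
  obtain ⟨f, hfinj, hf⟩ :=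
    (Finset.all_card_le_biUnion_card_iff_exists_injective
      (fun x : ↥X => G.neighborFinset ↑x)).mp hall
  have hfadj : ∀ x : ↥X, G.Adj ↑x (f x) := fun x =>
    (SimpleGraph.mem_neighborFinset _ _ _).mp (hf x)
  have hfY : ∀ x : ↥X, f x ∈ Y := fun x => hXY ↑x x.2 (f x) (hfadj x)
  -- surjectivity onto Y
  have hsurj : ∀ y ∈ Y, ∃ x : ↥X, f x = y := by
    have himg : (Finset.univ.image f) = Y := by
      apply Finset.eq_of_subset_of_card_le
      · intro y hy
        obtain ⟨x, _, rfl⟩ := Finset.mem_image.mp hy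
        exact hfY x
      · rw [Finset.card_image_of_injective _ hfinj, hY, Finset.card_univ,
          Fintype.card_coe, hX]
    intro y hy
    obtain ⟨x, _, rfl⟩ := Finset.mem_image.mp (himg ▸ hy)
    exact ⟨x, rfl⟩
  refine ⟨{ verts := Set.univ
            Adj := fun a b => (∃ h : a ∈ X, f ⟨a, h⟩ = b) ∨ (∃ h : b ∈ X, f ⟨b, h⟩ = a)
            adj_sub := by
              rintro a b (⟨h, rfl⟩ | ⟨h, rfl⟩)
              · exact hfadj ⟨a, h⟩
              · exact (hfadj ⟨b, h⟩).symm
            edge_vert := fun _ => Set.mem_univ _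
            symm := ⟨fun a b h => h.symm⟩ }, ?_, fun v => Set.mem_univ v⟩
  intro v _
  by_cases hv : v ∈ X
  · refine ⟨f ⟨v, hv⟩, Or.inl ⟨hv, rfl⟩, ?_⟩
    rintro w (⟨h, rfl⟩ | ⟨h, rfl⟩)
    · rfl
    · exact absurd (hfY ⟨w, h⟩) (Finset.disjoint_left.mp hdisj hv)
  · have hvY : v ∈ Y := by
      have := Finset.mem_univ v
      rw [← hcover, Finset.mem_union] at this
      tauto
    obtain ⟨x, hx⟩ := hsurj v hvY
    refine ⟨↑x, Or.inr ⟨x.2, by simpa using hx⟩, ?_⟩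
    rintro w (⟨h, rfl⟩ | ⟨h, hfw⟩)
    · exact absurd h hv
    · have : (⟨w, h⟩ : ↥X) = x := hfinj (by rw [hfw, hx])
      simpa using congrArg Subtype.val this
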